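/- Let f : X → ℝ be differentiable, μ-gradient dominated of order p, and suppose a sequence (x_k) satisfies f(x_{k+1}) - f(x_k) ≤ -δ‖∇f(x_{k+1})‖^{p/(p-1)} for all k. Then f(x_k) - f(x*) ≤ (f(x_0) - f(x*)) · (1 + (p/(p-1)) μ^{1/(p-1)} δ)^{-k} ≤ (f(x_0) - f(x*)) · exp(-(p/(p-1)) μ^{1/(p-1)} δ k / (1 + (p/(p-1)) μ^{1/(p-1)} δ)) for all k. -/

import Mathlib

open Real

theorem descent_gradient_dominated_implicit_linear_rate
    {X : Type*} [NormedAddCommGroup X] [InnerProductSpace ℝ X] [FiniteDimensional ℝ X]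
    (f : X → ℝ) (hf : Differentiable ℝ f)
    (xstar : X) (hmin : ∀ y, f xstar ≤ f y)
    (p δ μ : ℝ) (hp : 1 < p) (hδ : 0 < δ) (hμ : 0 < μ)
    (hdom : ∀ z : X, μ ^ (1 / (p - 1)) * (f z - f xstar) ≤
      (p - 1) / p * ‖gradient f z‖ ^ (p / (p - 1)))
    (x : ℕ → X)
    (hdesc : ∀ k : ℕ, f (x (k + 1)) - f (x k) ≤ -δ * ‖gradient f (x (k + 1))‖ ^ (p / (p - 1))) :
    ∀ k : ℕ,
      f (x k) - f xstar ≤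
        (f (x 0) - f xstar) * ((1 + p / (p - 1) * μ ^ (1 / (p - 1)) * δ)⁻¹) ^ k ∧
      (f (x 0) - f xstar) * ((1 + p / (p - 1) * μ ^ (1 / (p - 1)) * δ)⁻¹) ^ k ≤
        (f (x 0) - f xstar) *
          Real.exp (-(p / (p - 1) * μ ^ (1 / (p - 1)) * δ * k /
            (1 + p / (p - 1) * μ ^ (1 / (p - 1)) * δ))) := by
  set c : ℝ := p / (p - 1) * μ ^ (1 / (p - 1)) * δ with hc_def
  have hp1 : (0:ℝ) < p - 1 := by linarith
  have hp0 : (0:ℝ) < p := by linarith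
  have hμp : (0:ℝ) < μ ^ (1 / (p - 1)) := Real.rpow_pos_of_pos hμ _
  have hc : 0 < c := by positivity
  have h1c : (0:ℝ) < 1 + c := by linarith
  have hA : 0 ≤ f (x 0) - f xstar := by linarith [hmin (x 0)]
  -- key recursive inequality
  have key : ∀ k : ℕ, (1 + c) * (f (x (k + 1)) - f xstar) ≤ f (x k) - f xstar := by
    intro k
    have h1 := hdesc k
    have h2 := hdom (x (k + 1))
    have h3 : δ * (p / (p - 1)) * (μ ^ (1 / (p - 1)) * (f (x (k + 1)) - f xstar)) ≤
        δ * (p / (p - 1)) * ((p - 1) / p * ‖gradient f (x (k + 1))‖ ^ (p / (p - 1)))  := by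
      apply mul_le_mul_of_nonneg_left h2
      positivity
    have h4 : δ * (p / (p - 1)) * ((p - 1) / p * ‖gradient f (x (k + 1))‖ ^ (p / (p - 1)))
        = δ * ‖gradient f (x (k + 1))‖ ^ (p / (p - 1)) := by
      field_simp
    rw [h4] at h3
    have := hmin (x (k+1))
    nlinarith [h3, h1]
  -- first inequality by induction
  have part1 : ∀ k : ℕ, f (x k) - f xstar ≤ (f (x 0) - f xstar) * ((1 + c)⁻¹) ^ k := by
    intro k
    induction k with
    | zero => simp
    | succ n ih =>
      have hk := key n
      have : f (x (n + 1)) - f xstar ≤ (f (x n) - f xstar) * (1 + c)⁻¹ := by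
        rw [← div_eq_mul_inv, le_div_iff₀ h1c]
        nlinarith [hk]
      calc f (x (n + 1)) - f xstar ≤ (f (x n) - f xstar) * (1 + c)⁻¹ := this
        _ ≤ (f (x 0) - f xstar) * ((1 + c)⁻¹) ^ n * (1 + c)⁻¹ := by
            apply mul_le_mul_of_nonneg_right ih (by positivity)
        _ = (f (x 0) - f xstar) * ((1 + c)⁻¹) ^ (n + 1) := by ring
  intro k
  refine ⟨part1 k, ?_⟩
  apply mul_le_mul_of_nonneg_left _ hA
  have hbase : (1 + c)⁻¹ ≤ Real.exp (-(c / (1 + c))) := by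
    have h := Real.add_one_le_exp (-(c / (1 + c)))
    have : (1 + c)⁻¹ ≤ -(c / (1 + c)) + 1 := by
      rw [inv_le_iff_one_le_mul₀ h1c]
      field_simp
      linarith
    linarith
  calc ((1 + c)⁻¹) ^ k ≤ (Real.exp (-(c / (1 + c)))) ^ k := by
        apply pow_le_pow_left₀ (by positivity) hbase
    _ = Real.exp (-(c * k / (1 + c))) := by
        rw [← Real.exp_nat_mul]
        ring_nf
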